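/- Let L be a finite meet semilattice and f ∈ I(L,R) an element of the incidence algebra over a commutative ring R. Define the matrix M indexed by L with entries M(a,b) = f(a ∧ b, a). Then det M = Π_{a ∈ L} ( Σ_{c ∈ L} μ(c,a)·f(c,a) ), where μ is the Möbius function of L. -/
import Mathlib

open Finset

lemma perm_eq_one_of_le_apply {L : Type*} [Fintype L] [PartialOrder L]
    (s : Equiv.Perm L) (h : ∀ i, i ≤ s i) : s = 1 := by
  have wf : WellFounded ((· > ·) : L → L → Prop) := Finite.to_wellFoundedGT.wf
  have key : ∀ i : L, s i = i := by
    intro i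
    induction i using WellFounded.induction wf with
    | _ i ih =>
      rcases eq_or_lt_of_le (h i) with heq | hlt
      · exact heq.symm
      · have h2 : s (s i) = s i := ih (s i) hlt
        have := s.injective h2
        exact absurd this.symm hlt.ne
  ext i
  simp [key i]

/-- Determinant of a matrix that is lower triangular with respect to a partial order. -/
lemma det_eq_prod_diag_of_poset_lowerTriangular {L : Type*} [Fintype L] [PartialOrder L]
    [DecidableEq L] {R : Type*} [CommRing R] (M : Matrix L L R)
    (h : ∀ a b : L, ¬ b ≤ a → M a b = 0) : M.det = ∏ a : L, M a a := by
  rw [Matrix.det_apply]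
  rw [Finset.sum_eq_single (1 : Equiv.Perm L)]
  · simp
  · intro s _ hs
    have hex : ∃ i : L, ¬ i ≤ s i := by
      by_contra hall
      push_neg at hall
      exact hs (perm_eq_one_of_le_apply s hall)
    obtain ⟨i, hi⟩ := hex
    have hz : (∏ j : L, M (s j) j) = 0 :=
      Finset.prod_eq_zero (Finset.mem_univ i) (h (s i) i hi)
    rw [hz, smul_zero]
  · intro h1
    exact absurd (Finset.mem_univ 1) h1

/-- **Lindström's theorem.** For a finite meet semilattice `L` and an incidence-algebra element
`f` over a commutative ring `R`, the matrix with entries `f (a ⊓ b) a` has determinant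
`∏ a, ∑ c, μ(c,a) · f(c,a)`, where `μ` is the Möbius function of `L`. -/
theorem det_lindstrom {L : Type*} [Fintype L] [SemilatticeInf L] [DecidableEq L]
    [LocallyFiniteOrder L] {R : Type*} [CommRing R] (f : L → L → R)
    (hf : ∀ a b, ¬ a ≤ b → f a b = 0) :
    Matrix.det (Matrix.of fun a b : L => f (a ⊓ b) a) =
      ∏ a : L, ∑ c : L, IncidenceAlgebra.mu R c a * f c a := by
  classical
  set P : Matrix L L R :=
    Matrix.of (fun a c : L => if c ≤ a then ∑ d : L, IncidenceAlgebra.mu R d c * f d a else 0)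
    with hP
  set Q : Matrix L L R := Matrix.of (fun c b : L => if c ≤ b then (1 : R) else 0) with hQ
  have hentry : ∀ a b : L, f (a ⊓ b) a = ∑ c : L, P a c * Q c b := by
    intro a b
    have term : ∀ c : L, P a c * Q c b =
        if c ≤ a ⊓ b then ∑ d : L, IncidenceAlgebra.mu R d c * f d a else 0 := by
      intro c
      by_cases h1 : c ≤ a <;> by_cases h2 : c ≤ b <;>
        simp [hP, hQ, le_inf_iff, h1, h2]
    rw [Finset.sum_congr rfl fun c _ => term c, ← Finset.sum_filter, Finset.sum_comm]
    have inner : ∀ d : L,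
        (∑ c ∈ univ.filter (· ≤ a ⊓ b), IncidenceAlgebra.mu R d c * f d a)
        = (if d = a ⊓ b then 1 else 0) * f d a := by
      intro d
      rw [← Finset.sum_mul]
      congr 1
      rw [← IncidenceAlgebra.sum_Icc_mu_right (𝕜 := R) d (a ⊓ b)]
      refine (Finset.sum_subset ?_ ?_).symm
      · intro c hc
        exact mem_filter.2 ⟨mem_univ _, (mem_Icc.1 hc).2⟩
      · intro c hc hnc
        exact IncidenceAlgebra.apply_eq_zero_of_not_le
          (fun hdc => hnc (mem_Icc.2 ⟨hdc, (mem_filter.1 hc).2⟩)) _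
    rw [Finset.sum_congr rfl fun d _ => inner d]
    simp
  have hfact : (Matrix.of fun a b : L => f (a ⊓ b) a) = P * Q := by
    ext a b
    rw [Matrix.mul_apply, Matrix.of_apply]
    exact hentry a b
  rw [hfact, Matrix.det_mul]
  have hdetQ : Q.det = 1 := by
    rw [← Matrix.det_transpose,
      det_eq_prod_diag_of_poset_lowerTriangular Q.transpose (fun a b hab => if_neg hab)]
    simp [hQ]
  have hdetP : P.det = ∏ a : L, ∑ c : L, IncidenceAlgebra.mu R c a * f c a := by
    rw [det_eq_prod_diag_of_poset_lowerTriangular P (fun a c hca => if_neg hca)]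
    simp [hP]
  rw [hdetP, hdetQ, mul_one]
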